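/- Let R_X : T_X M → M be a retraction on a compact embedded submanifold M ⊂ ℝⁿ (R_X(0)=X and DR_X(0) = id). Then there exist constants M₁, M₂ ≥ 0 such that for all X ∈ M and η ∈ T_X M: ‖R_X(η) - X‖ ≤ M₁‖η‖ and ‖R_X(η) - (X + η)‖ ≤ M₂‖η‖². -/

import Mathlib

open Set Metric

/-- retraction bounds: let `R X : T_X M → M` be a (twice
continuously differentiable) retraction on a compact embedded submanifold
`M ⊂ ℝⁿ`, i.e. `R X 0 = X`, `R X` maps tangent vectors into `M`, and the
differential of `R X` at `0` is the identity on `T_X M`.  Then there exist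
constants `M₁, M₂ ≥ 0` such that for all `X ∈ M` and `η ∈ T_X M`:
`‖R_X(η) - X‖ ≤ M₁‖η‖` and `‖R_X(η) - (X + η)‖ ≤ M₂‖η‖²`. -/
theorem retraction_first_and_second_order_bounds
    {n : ℕ} (M : Set (EuclideanSpace ℝ (Fin n))) (hM : IsCompact M)
    (T : EuclideanSpace ℝ (Fin n) → Submodule ℝ (EuclideanSpace ℝ (Fin n)))
    (R : EuclideanSpace ℝ (Fin n) → EuclideanSpace ℝ (Fin n) →
      EuclideanSpace ℝ (Fin n))
    (hsmooth : ContDiff ℝ 2 (fun p : EuclideanSpace ℝ (Fin n) ×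
      EuclideanSpace ℝ (Fin n) => R p.1 p.2))
    (hR0 : ∀ X ∈ M, R X 0 = X)
    (hRmem : ∀ X ∈ M, ∀ η ∈ T X, R X η ∈ M)
    -- the differential of `R X` at `0_X` is the identity on `T_X M`
    (hDR : ∀ X ∈ M, ∀ η ∈ T X, HasDerivAt (fun t : ℝ => R X (t • η)) η 0) :
    ∃ M₁ M₂ : ℝ, 0 ≤ M₁ ∧ 0 ≤ M₂ ∧ ∀ X ∈ M, ∀ η ∈ T X,
      ‖R X η - X‖ ≤ M₁ * ‖η‖ ∧ ‖R X η - (X + η)‖ ≤ M₂ * ‖η‖ ^ 2 := by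
  classical
  set F : (EuclideanSpace ℝ (Fin n) × EuclideanSpace ℝ (Fin n)) → EuclideanSpace ℝ (Fin n) :=
    fun p => R p.1 p.2 with hF
  -- bound on M
  obtain ⟨D₀, hD₀⟩ := hM.exists_bound_of_continuousOn continuousOn_id
  set D : ℝ := max D₀ 0 with hDdef
  have hD : ∀ x ∈ M, ‖x‖ ≤ D := fun x hx => (hD₀ x hx).trans (le_max_left _ _)
  have hD0 : 0 ≤ D := le_max_right _ _
  -- differentiability facts
  have hFdiff : Differentiable ℝ F := hsmooth.differentiable (by norm_num)
  have hG : ContDiff ℝ 1 (fderiv ℝ F) := hsmooth.fderiv_right (by norm_num)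
  have hGcont : Continuous (fderiv ℝ (fderiv ℝ F)) := hG.continuous_fderiv one_ne_zero
  -- bound on second derivative on the compact set K
  have hK : IsCompact ((M ×ˢ closedBall (0 : EuclideanSpace ℝ (Fin n)) 1) :
      Set (EuclideanSpace ℝ (Fin n) × EuclideanSpace ℝ (Fin n))) :=
    hM.prod (isCompact_closedBall _ _)
  obtain ⟨C₀, hC₀⟩ := hK.exists_bound_of_continuousOn (f := fderiv ℝ (fderiv ℝ F)) hGcont.continuousOn
  set C : ℝ := max C₀ 0 with hCdef
  have hC : ∀ p ∈ (M ×ˢ closedBall (0 : EuclideanSpace ℝ (Fin n)) 1 :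
      Set (EuclideanSpace ℝ (Fin n) × EuclideanSpace ℝ (Fin n))),
      ‖fderiv ℝ (fderiv ℝ F) p‖ ≤ C := fun p hp => (hC₀ p hp).trans (le_max_left _ _)
  have hC0 : 0 ≤ C := le_max_right _ _
  clear_value C D
  -- key estimate for small η
  have hkey : ∀ X ∈ M, ∀ η ∈ T X, ‖η‖ ≤ 1 → ‖R X η - (X + η)‖ ≤ C * ‖η‖ ^ 2 := by
    intro X hX η hη hη1
    -- the curve g t = R X (t • η)
    have hg : ∀ t : ℝ, HasDerivAt (fun t : ℝ => R X (t • η))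
        (fderiv ℝ F (X, t • η) (0, η)) t := by
      intro t
      have h1 : HasDerivAt (fun t : ℝ => ((X, t • η) :
          EuclideanSpace ℝ (Fin n) × EuclideanSpace ℝ (Fin n)))
          ((0 : EuclideanSpace ℝ (Fin n)), η) t := by
        have := ((hasDerivAt_id t).smul_const η)
        simp only [one_smul] at this
        exact (hasDerivAt_const t X).prodMk this
      have h2 : HasFDerivAt F (fderiv ℝ F (X, t • η)) (X, t • η) :=
        (hFdiff (X, t • η)).hasFDerivAt
      exact h2.comp_hasDerivAt t h1
    -- derivative at 0 is η
    have h0 : fderiv ℝ F (X, (0 : EuclideanSpace ℝ (Fin n)))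
        ((0 : EuclideanSpace ℝ (Fin n)), η) = η := by
      have := (hg 0).unique (hDR X hX η hη)
      simpa using this
    -- the segment and its Lipschitz bound
    set s : Set (EuclideanSpace ℝ (Fin n) × EuclideanSpace ℝ (Fin n)) :=
      segment ℝ ((X, (0 : EuclideanSpace ℝ (Fin n)))) (X, η) with hs
    have hssub : s ⊆ (M ×ˢ closedBall (0 : EuclideanSpace ℝ (Fin n)) 1) := by
      rintro p ⟨a, b, ha, hb, hab, rfl⟩
      constructor
      · show a • X + b • X ∈ M
        rw [← add_smul, hab, one_smul]; exact hX
      · show a • (0 : EuclideanSpace ℝ (Fin n)) + b • η ∈ closedBall _ 1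
        simp only [smul_zero, zero_add, mem_closedBall, dist_zero_right, norm_smul,
          Real.norm_eq_abs, abs_of_nonneg hb]
        calc b * ‖η‖ ≤ 1 * 1 := by
              apply mul_le_mul (by linarith) hη1 (norm_nonneg _) zero_le_one
          _ = 1 := by ring
    have hlip : ∀ p ∈ s, ∀ q ∈ s, ‖fderiv ℝ F p - fderiv ℝ F q‖ ≤ C * ‖p - q‖ := by
      intro p hp q hq
      exact (convex_segment _ _).norm_image_sub_le_of_norm_fderiv_le
        (fun x _ => (hG.differentiable one_ne_zero) x)
        (fun x hx => hC x (hssub hx)) hq hp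
    -- membership of (X, t • η) in s for t ∈ [0,1]
    have hmem : ∀ t : ℝ, 0 ≤ t → t ≤ 1 → ((X, t • η) :
        EuclideanSpace ℝ (Fin n) × EuclideanSpace ℝ (Fin n)) ∈ s := by
      intro t ht0 ht1
      have heq : ((1 - t) • ((X, (0 : EuclideanSpace ℝ (Fin n))) :
          EuclideanSpace ℝ (Fin n) × EuclideanSpace ℝ (Fin n)) + t • (X, η)) = (X, t • η) := by
        rw [Prod.smul_mk, Prod.smul_mk, Prod.mk_add_mk]
        congr 1
        · rw [← add_smul]; norm_num
        · simp
      exact ⟨1 - t, t, by linarith, ht0, by ring, heq⟩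
    -- the function h t = R X (t • η) - (X + t • η)
    set h : ℝ → EuclideanSpace ℝ (Fin n) := fun t => R X (t • η) - (X + t • η) with hhdef
    have hh : ∀ t ∈ Icc (0 : ℝ) 1, HasDerivWithinAt h
        (fderiv ℝ F (X, t • η) ((0 : EuclideanSpace ℝ (Fin n)), η) - η) (Icc (0 : ℝ) 1) t := by
      intro t _
      have h2 : HasDerivAt (fun t : ℝ => X + t • η) η t := by
        have := ((hasDerivAt_id t).smul_const η)
        simp only [one_smul] at this
        have h3 := (hasDerivAt_const t X).add this
        rw [zero_add] at h3
        exact h3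
      exact ((hg t).sub h2).hasDerivWithinAt
    have hbound : ∀ t ∈ Ico (0 : ℝ) 1,
        ‖fderiv ℝ F (X, t • η) ((0 : EuclideanSpace ℝ (Fin n)), η) - η‖ ≤ C * ‖η‖ ^ 2 := by
      intro t ht
      have h4 : fderiv ℝ F (X, t • η) ((0 : EuclideanSpace ℝ (Fin n)), η) - η
          = (fderiv ℝ F (X, t • η) - fderiv ℝ F (X, (0 : EuclideanSpace ℝ (Fin n))))
            ((0 : EuclideanSpace ℝ (Fin n)), η) := by
        rw [ContinuousLinearMap.sub_apply, h0]
      rw [h4]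
      have hmem0 : ((X, (0 : EuclideanSpace ℝ (Fin n))) :
          EuclideanSpace ℝ (Fin n) × EuclideanSpace ℝ (Fin n)) ∈ s := left_mem_segment _ _ _
      calc ‖(fderiv ℝ F (X, t • η) - fderiv ℝ F (X, (0 : EuclideanSpace ℝ (Fin n))))
            ((0 : EuclideanSpace ℝ (Fin n)), η)‖
          ≤ ‖fderiv ℝ F (X, t • η) - fderiv ℝ F (X, (0 : EuclideanSpace ℝ (Fin n)))‖ *
            ‖(((0 : EuclideanSpace ℝ (Fin n)), η) :
              EuclideanSpace ℝ (Fin n) × EuclideanSpace ℝ (Fin n))‖ :=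
            ContinuousLinearMap.le_opNorm _ _
        _ ≤ (C * ‖((X, t • η) : EuclideanSpace ℝ (Fin n) × EuclideanSpace ℝ (Fin n)) -
              (X, (0 : EuclideanSpace ℝ (Fin n)))‖) * ‖(((0 : EuclideanSpace ℝ (Fin n)), η) :
              EuclideanSpace ℝ (Fin n) × EuclideanSpace ℝ (Fin n))‖ := by
            apply mul_le_mul_of_nonneg_right _ (norm_nonneg _)
            exact hlip _ (hmem t ht.1 ht.2.le) _ hmem0
        _ ≤ C * ‖η‖ ^ 2 := by
            have e1 : ‖((X, t • η) : EuclideanSpace ℝ (Fin n) × EuclideanSpace ℝ (Fin n)) -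
                (X, (0 : EuclideanSpace ℝ (Fin n)))‖ = ‖t • η‖ := by
              simp [Prod.norm_def]
            have e2 : ‖(((0 : EuclideanSpace ℝ (Fin n)), η) :
                EuclideanSpace ℝ (Fin n) × EuclideanSpace ℝ (Fin n))‖ = ‖η‖ := by
              simp [Prod.norm_def]
            rw [e1, e2, norm_smul, Real.norm_eq_abs, abs_of_nonneg ht.1]
            have ht' : t * ‖η‖ ≤ ‖η‖ := by
              nlinarith [norm_nonneg η, ht.1, ht.2.le]
            have hmul := mul_le_mul_of_nonneg_right
              (mul_le_mul_of_nonneg_left ht' hC0) (norm_nonneg η)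
            nlinarith [hmul]
    have hmvt := norm_image_sub_le_of_norm_deriv_le_segment_01' hh hbound
    have e1 : h 1 = R X η - (X + η) := by simp [hhdef]
    have e2 : h 0 = 0 := by simp [hhdef, hR0 X hX]
    rw [e1, e2, sub_zero] at hmvt
    exact hmvt
  -- assemble the constants
  refine ⟨C + 1 + 2 * D, C + 2 * D + 1, by linarith, by linarith, ?_⟩
  intro X hX η hη
  have hXn : ‖X‖ ≤ D := hD X hX
  have hRn : ‖R X η‖ ≤ D := hD _ (hRmem X hX η hη)
  have hdiff : ‖R X η - X‖ ≤ 2 * D := by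
    calc ‖R X η - X‖ ≤ ‖R X η‖ + ‖X‖ := norm_sub_le _ _
      _ ≤ 2 * D := by linarith
  have hn0 : (0 : ℝ) ≤ ‖η‖ := norm_nonneg _
  have htri : ‖R X η - (X + η)‖ ≤ ‖R X η - X‖ + ‖η‖ := by
    have : R X η - (X + η) = (R X η - X) - η := by abel
    rw [this]; exact norm_sub_le _ _
  rcases le_or_gt ‖η‖ 1 with hsmall | hbig
  · have hk := hkey X hX η hη hsmall
    have hsq : ‖η‖ ^ 2 ≤ ‖η‖ := by
      calc ‖η‖ ^ 2 = ‖η‖ * ‖η‖ := sq ‖η‖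
        _ ≤ 1 * ‖η‖ := mul_le_mul_of_nonneg_right hsmall hn0
        _ = ‖η‖ := one_mul _
    have hCsq : C * ‖η‖ ^ 2 ≤ C * ‖η‖ := mul_le_mul_of_nonneg_left hsq hC0
    have hDn : 0 ≤ 2 * D * ‖η‖ := by positivity
    constructor
    · calc ‖R X η - X‖ = ‖(R X η - (X + η)) + η‖ := by abel_nf
        _ ≤ ‖R X η - (X + η)‖ + ‖η‖ := norm_add_le _ _
        _ ≤ C * ‖η‖ ^ 2 + ‖η‖ := by linarith
        _ ≤ (C + 1 + 2 * D) * ‖η‖ := by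
            have : (C + 1 + 2 * D) * ‖η‖ = C * ‖η‖ + ‖η‖ + 2 * D * ‖η‖ := by ring
            linarith
    · calc ‖R X η - (X + η)‖ ≤ C * ‖η‖ ^ 2 := hk
        _ ≤ (C + 2 * D + 1) * ‖η‖ ^ 2 :=
            mul_le_mul_of_nonneg_right (by linarith) (sq_nonneg _)
  · have hn1 : (1 : ℝ) ≤ ‖η‖ := hbig.le
    have hsq : ‖η‖ ≤ ‖η‖ ^ 2 := by
      calc ‖η‖ = ‖η‖ * 1 := (mul_one _).symm
        _ ≤ ‖η‖ * ‖η‖ := mul_le_mul_of_nonneg_left hn1 hn0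
        _ = ‖η‖ ^ 2 := (sq ‖η‖).symm
    have hsq1 : (1 : ℝ) ≤ ‖η‖ ^ 2 := by
      calc (1 : ℝ) ≤ ‖η‖ := hn1
        _ ≤ ‖η‖ ^ 2 := hsq
    have hDsq : 2 * D ≤ 2 * D * ‖η‖ ^ 2 := by
      have := mul_le_mul_of_nonneg_left hsq1 (by linarith : (0 : ℝ) ≤ 2 * D)
      simpa using this
    have hDlin : 2 * D ≤ 2 * D * ‖η‖ := by
      have := mul_le_mul_of_nonneg_left hn1 (by linarith : (0 : ℝ) ≤ 2 * D)
      simpa using this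
    have hCn : 0 ≤ C * ‖η‖ := mul_nonneg hC0 hn0
    have hCsq : 0 ≤ C * ‖η‖ ^ 2 := mul_nonneg hC0 (sq_nonneg _)
    constructor
    · calc ‖R X η - X‖ ≤ 2 * D := hdiff
        _ ≤ (C + 1 + 2 * D) * ‖η‖ := by
            have : (C + 1 + 2 * D) * ‖η‖ = C * ‖η‖ + ‖η‖ + 2 * D * ‖η‖ := by ring
            linarith
    · calc ‖R X η - (X + η)‖ ≤ ‖R X η - X‖ + ‖η‖ := htri
        _ ≤ 2 * D + ‖η‖ := by linarith
        _ ≤ (C + 2 * D + 1) * ‖η‖ ^ 2 := by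
            have : (C + 2 * D + 1) * ‖η‖ ^ 2 = C * ‖η‖ ^ 2 + 2 * D * ‖η‖ ^ 2 + ‖η‖ ^ 2 := by ring
            linarith
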